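/- Let 0 < s < 1 and let X take values x_i ∈ [a,b] ⊂ (0,∞) with probabilities p_i. Then (1/2) s(1−s) b^{s−2} Var(X) ≤ (EX)^s − E(X^s) ≤ (1/2) s(1−s) a^{s−2} Var(X), where EX = ∑ p_i x_i, E(X^s) = ∑ p_i x_i^s, Var(X) = ∑ p_i x_i² − (EX)². -/

import Mathlib

open Real

/-- Bernoulli for exponents in [-1,0]. -/
lemma bernoulli_neg {r q : ℝ} (hr : -1 < r) (hq0 : -1 ≤ q) (hq1 : q ≤ 0) :
    1 + q * r ≤ (1 + r) ^ q := by
  have h1r : (0:ℝ) < 1 + r := by linarith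
  have hpos : (0:ℝ) < (1 + r) ^ q := Real.rpow_pos_of_pos h1r q
  rcases le_or_gt (1 + q * r) 0 with h | h
  · linarith
  · have h1 : (1 + r) ^ (-q) ≤ 1 + (-q) * r :=
      rpow_one_add_le_one_add_mul_self hr.le (by linarith) (by linarith)
    have h2 : (1 + r) ^ q * (1 + r) ^ (-q) = 1 := by
      rw [← Real.rpow_add h1r]; simp
    have hpos2 : (0:ℝ) < (1 + r) ^ (-q) := Real.rpow_pos_of_pos h1r _
    nlinarith [sq_nonneg (q * r), mul_le_mul_of_nonneg_left h1 h.le]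

/-- Tangent line inequality for u ↦ u^(s-1) (convex, since s-1 ∈ (-1,0)). -/
lemma tangent_rpow {s t u : ℝ} (hs0 : 0 < s) (hs1 : s < 1) (ht : 0 < t) (hu : 0 < u) :
    t ^ (s - 1) + (s - 1) * t ^ (s - 2) * (u - t) ≤ u ^ (s - 1) := by
  have hr : -1 < u / t - 1 := by
    have : 0 < u / t := div_pos hu ht
    linarith
  have hb := bernoulli_neg hr (by linarith : (-1:ℝ) ≤ s - 1) (by linarith)
  have h1 : 1 + (u / t - 1) = u / t := by ring
  rw [h1, Real.div_rpow hu.le ht.le] at hb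
  have htpos : (0:ℝ) < t ^ (s - 1) := Real.rpow_pos_of_pos ht _
  have h2 : t ^ (s - 2) = t ^ (s - 1) / t := by
    rw [show s - 2 = (s - 1) - 1 by ring, Real.rpow_sub ht, Real.rpow_one]
  have h3 := mul_le_mul_of_nonneg_left hb htpos.le
  rw [mul_div_cancel₀ _ (ne_of_gt htpos)] at h3
  rw [h2]
  have hrw : t ^ (s-1) * (1 + (s - 1) * (u / t - 1))
      = t ^ (s-1) + (s-1) * (t ^ (s-1) / t) * (u - t) := by
    field_simp
  linarith [hrw ▸ h3]
section
variable {s a b m : ℝ}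

lemma hasDeriv_aux (hs0 : 0 < s) (C : ℝ) {t : ℝ} (ht : 0 < t) :
    HasDerivAt (fun t => m ^ s + s * m ^ (s-1) * (t - m) - C * (t - m) ^ 2 - t ^ s)
      (s * m ^ (s-1) - 2 * C * (t - m) - s * t ^ (s-1)) t := by
  have hid : HasDerivAt (fun t : ℝ => t - m) 1 t := (hasDerivAt_id t).sub_const m
  have hq : HasDerivAt (fun t : ℝ => (t - m) ^ 2) ((2:ℕ) * (t - m) ^ 1 * 1) t := hid.pow 2
  have hrp : HasDerivAt (fun t : ℝ => t ^ s) (s * t ^ (s - 1)) t :=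
    Real.hasDerivAt_rpow_const (Or.inl ht.ne')
  have := (((hasDerivAt_const t (m ^ s)).add (hid.const_mul (s * m ^ (s-1)))).sub
      (hq.const_mul C)).sub hrp
  refine this.congr_deriv ?_
  push_cast
  ring

/-- Upper tangent bound: x^s ≤ tangent - (quadratic with b). -/
lemma tangent_upper (hs0 : 0 < s) (hs1 : s < 1) (ha : 0 < a)
    (hm : m ∈ Set.Icc a b) {x : ℝ} (hx : x ∈ Set.Icc a b) :
    x ^ s ≤ m ^ s + s * m ^ (s-1) * (x - m) - (1/2) * s * (1-s) * b ^ (s-2) * (x - m) ^ 2 := by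
  set C : ℝ := (1/2) * s * (1-s) * b ^ (s-2) with hC
  set F : ℝ → ℝ := fun t => m ^ s + s * m ^ (s-1) * (t - m) - C * (t - m) ^ 2 - t ^ s with hFdef
  have hm0 : 0 < m := lt_of_lt_of_le ha hm.1
  have hFm : F m = 0 := by simp [hFdef]
  have key : 0 ≤ F x := by
    rcases le_total m x with hmx | hmx
    · -- F monotone on [m, b]
      have hmono : MonotoneOn F (Set.Icc m b) := by
        apply monotoneOn_of_hasDerivWithinAt_nonneg (f' := fun t =>
            s * m ^ (s-1) - 2 * C * (t - m) - s * t ^ (s-1)) (convex_Icc m b)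
        · intro t ht
          exact (hasDeriv_aux hs0 C (lt_of_lt_of_le hm0 ht.1)).continuousAt.continuousWithinAt
        · intro t ht
          rw [interior_Icc] at ht
          exact (hasDeriv_aux hs0 C (lt_of_lt_of_le hm0 ht.1.le)).hasDerivWithinAt
        · intro t ht
          rw [interior_Icc] at ht
          obtain ⟨ht1, ht2⟩ := ht
          have ht0 : 0 < t := lt_trans hm0 ht1
          have h1 := tangent_rpow hs0 hs1 ht0 hm0
          have h2 : b ^ (s-2) ≤ t ^ (s-2) :=
            Real.rpow_le_rpow_of_nonpos ht0 ht2.le (by linarith)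
          rw [hC]
          nlinarith [mul_le_mul_of_nonneg_left h2 (mul_pos (mul_pos hs0
            (by linarith : (0:ℝ) < 1 - s)) (by linarith : (0:ℝ) < t - m)).le]
      have := hmono (Set.left_mem_Icc.mpr (hmx.trans hx.2)) ⟨hmx, hx.2⟩ hmx
      linarith [hFm ▸ this]
    · -- F antitone on [a, m]
      have hanti : AntitoneOn F (Set.Icc a m) := by
        apply antitoneOn_of_hasDerivWithinAt_nonpos (f' := fun t =>
            s * m ^ (s-1) - 2 * C * (t - m) - s * t ^ (s-1)) (convex_Icc a m)
        · intro t ht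
          exact (hasDeriv_aux hs0 C (lt_of_lt_of_le ha ht.1)).continuousAt.continuousWithinAt
        · intro t ht
          rw [interior_Icc] at ht
          exact (hasDeriv_aux hs0 C (lt_of_lt_of_le ha ht.1.le)).hasDerivWithinAt
        · intro t ht
          rw [interior_Icc] at ht
          obtain ⟨ht1, ht2⟩ := ht
          have ht0 : 0 < t := lt_of_lt_of_le ha ht1.le
          have h1 := tangent_rpow hs0 hs1 hm0 ht0
          have h2 : b ^ (s-2) ≤ m ^ (s-2) :=
            Real.rpow_le_rpow_of_nonpos hm0 hm.2 (by linarith)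
          rw [hC]
          nlinarith [mul_le_mul_of_nonneg_left h2 (mul_pos (mul_pos hs0
            (by linarith : (0:ℝ) < 1 - s)) (by linarith : (0:ℝ) < m - t)).le]
      have := hanti ⟨hx.1, hmx⟩ ⟨hm.1, le_refl m⟩ hmx
      linarith [hFm ▸ this]
  simp only [hFdef] at key
  linarith

end
section
variable {s a b m : ℝ}

/-- Lower tangent bound: tangent - (quadratic with a) ≤ x^s. -/
lemma tangent_lower (hs0 : 0 < s) (hs1 : s < 1) (ha : 0 < a)
    (hm : m ∈ Set.Icc a b) {x : ℝ} (hx : x ∈ Set.Icc a b) :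
    m ^ s + s * m ^ (s-1) * (x - m) - (1/2) * s * (1-s) * a ^ (s-2) * (x - m) ^ 2 ≤ x ^ s := by
  set C : ℝ := (1/2) * s * (1-s) * a ^ (s-2) with hC
  set F : ℝ → ℝ := fun t => m ^ s + s * m ^ (s-1) * (t - m) - C * (t - m) ^ 2 - t ^ s with hFdef
  have hm0 : 0 < m := lt_of_lt_of_le ha hm.1
  have hFm : F m = 0 := by simp [hFdef]
  have key : F x ≤ 0 := by
    rcases le_total m x with hmx | hmx
    · have hanti : AntitoneOn F (Set.Icc m b) := by
        apply antitoneOn_of_hasDerivWithinAt_nonpos (f' := fun t =>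
            s * m ^ (s-1) - 2 * C * (t - m) - s * t ^ (s-1)) (convex_Icc m b)
        · intro t ht
          exact (hasDeriv_aux hs0 C (lt_of_lt_of_le hm0 ht.1)).continuousAt.continuousWithinAt
        · intro t ht
          rw [interior_Icc] at ht
          exact (hasDeriv_aux hs0 C (lt_of_lt_of_le hm0 ht.1.le)).hasDerivWithinAt
        · intro t ht
          rw [interior_Icc] at ht
          obtain ⟨ht1, ht2⟩ := ht
          have ht0 : 0 < t := lt_trans hm0 ht1
          have h1 := tangent_rpow hs0 hs1 hm0 ht0
          have h2 : m ^ (s-2) ≤ a ^ (s-2) :=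
            Real.rpow_le_rpow_of_nonpos ha hm.1 (by linarith)
          rw [hC]
          nlinarith [mul_le_mul_of_nonneg_left h2 (mul_pos (mul_pos hs0
            (by linarith : (0:ℝ) < 1 - s)) (by linarith : (0:ℝ) < t - m)).le]
      have := hanti (Set.left_mem_Icc.mpr (hmx.trans hx.2)) ⟨hmx, hx.2⟩ hmx
      linarith [hFm ▸ this]
    · have hmono : MonotoneOn F (Set.Icc a m) := by
        apply monotoneOn_of_hasDerivWithinAt_nonneg (f' := fun t =>
            s * m ^ (s-1) - 2 * C * (t - m) - s * t ^ (s-1)) (convex_Icc a m)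
        · intro t ht
          exact (hasDeriv_aux hs0 C (lt_of_lt_of_le ha ht.1)).continuousAt.continuousWithinAt
        · intro t ht
          rw [interior_Icc] at ht
          exact (hasDeriv_aux hs0 C (lt_of_lt_of_le ha ht.1.le)).hasDerivWithinAt
        · intro t ht
          rw [interior_Icc] at ht
          obtain ⟨ht1, ht2⟩ := ht
          have ht0 : 0 < t := lt_of_lt_of_le ha ht1.le
          have h1 := tangent_rpow hs0 hs1 ht0 hm0
          have h2 : t ^ (s-2) ≤ a ^ (s-2) :=
            Real.rpow_le_rpow_of_nonpos ha ht1.le (by linarith)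
          rw [hC]
          nlinarith [mul_le_mul_of_nonneg_left h2 (mul_pos (mul_pos hs0
            (by linarith : (0:ℝ) < 1 - s)) (by linarith : (0:ℝ) < m - t)).le]
      have := hmono ⟨hx.1, hmx⟩ ⟨hm.1, le_refl m⟩ hmx
      linarith [hFm ▸ this]
  simp only [hFdef] at key
  linarith

end
theorem moment_inequality_s_lt_one
    (n : ℕ) (s a b : ℝ) (hs0 : 0 < s) (hs1 : s < 1) (ha : 0 < a) (hab : a ≤ b)
    (p x : Fin n → ℝ)
    (hp : ∀ i, 0 < p i) (hps : ∑ i, p i = 1)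
    (hx : ∀ i, x i ∈ Set.Icc a b) :
    (1 / 2) * s * (1 - s) * b ^ (s - 2) *
        (∑ i, p i * (x i) ^ 2 - (∑ i, p i * x i) ^ 2) ≤
      (∑ i, p i * x i) ^ s - ∑ i, p i * x i ^ s ∧
    (∑ i, p i * x i) ^ s - ∑ i, p i * x i ^ s ≤
      (1 / 2) * s * (1 - s) * a ^ (s - 2) *
        (∑ i, p i * (x i) ^ 2 - (∑ i, p i * x i) ^ 2) := by
  set m : ℝ := ∑ i, p i * x i with hmdef
  have hm : m ∈ Set.Icc a b := by
    constructor
    · calc a = ∑ i, p i * a := by rw [← Finset.sum_mul, hps, one_mul]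
        _ ≤ m := Finset.sum_le_sum fun i _ =>
            mul_le_mul_of_nonneg_left (hx i).1 (hp i).le
    · calc m ≤ ∑ i, p i * b := Finset.sum_le_sum fun i _ =>
            mul_le_mul_of_nonneg_left (hx i).2 (hp i).le
        _ = b := by rw [← Finset.sum_mul, hps, one_mul]
  -- expectation identities
  have hsum1 : ∑ i, p i * (x i - m) = 0 := by
    simp only [mul_sub]
    rw [Finset.sum_sub_distrib, ← Finset.sum_mul, hps, one_mul, ← hmdef, sub_self]
  have hsum2 : ∑ i, p i * (x i - m) ^ 2 = (∑ i, p i * (x i) ^ 2) - m ^ 2 := by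
    have e : ∀ i, p i * (x i - m) ^ 2
        = p i * (x i) ^ 2 - (2 * m) * (p i * x i) + m ^ 2 * p i := fun i => by ring
    rw [Finset.sum_congr rfl fun i _ => e i, Finset.sum_add_distrib, Finset.sum_sub_distrib,
      ← Finset.mul_sum, ← Finset.mul_sum, ← hmdef, hps]
    ring
  have hconst : ∀ (c : ℝ), ∑ i, p i * c = c := fun c => by
    rw [← Finset.sum_mul, hps, one_mul]
  constructor
  · -- lower bound: use tangent_upper
    have h := Finset.sum_le_sum (s := Finset.univ) (fun i _ =>
      mul_le_mul_of_nonneg_left (tangent_upper hs0 hs1 ha hm (hx i)) (hp i).le)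
    have hL : ∑ i, p i * (m ^ s + s * m ^ (s-1) * (x i - m)
          - (1/2) * s * (1-s) * b ^ (s-2) * (x i - m) ^ 2)
        = m ^ s - (1/2) * s * (1-s) * b ^ (s-2) * ((∑ i, p i * (x i) ^ 2) - m ^ 2) := by
      have e : ∀ i, p i * (m ^ s + s * m ^ (s-1) * (x i - m)
            - (1/2) * s * (1-s) * b ^ (s-2) * (x i - m) ^ 2)
          = p i * m ^ s + (s * m ^ (s-1)) * (p i * (x i - m))
            - ((1/2) * s * (1-s) * b ^ (s-2)) * (p i * (x i - m) ^ 2) := fun i => by ring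
      rw [Finset.sum_congr rfl fun i _ => e i, Finset.sum_sub_distrib, Finset.sum_add_distrib,
        ← Finset.mul_sum, ← Finset.mul_sum, hsum1, hsum2, hconst]
      ring
    rw [hL] at h
    linarith
  · -- upper bound: use tangent_lower
    have h := Finset.sum_le_sum (s := Finset.univ) (fun i _ =>
      mul_le_mul_of_nonneg_left (tangent_lower hs0 hs1 ha hm (hx i)) (hp i).le)
    have hL : ∑ i, p i * (m ^ s + s * m ^ (s-1) * (x i - m)
          - (1/2) * s * (1-s) * a ^ (s-2) * (x i - m) ^ 2)
        = m ^ s - (1/2) * s * (1-s) * a ^ (s-2) * ((∑ i, p i * (x i) ^ 2) - m ^ 2) := by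
      have e : ∀ i, p i * (m ^ s + s * m ^ (s-1) * (x i - m)
            - (1/2) * s * (1-s) * a ^ (s-2) * (x i - m) ^ 2)
          = p i * m ^ s + (s * m ^ (s-1)) * (p i * (x i - m))
            - ((1/2) * s * (1-s) * a ^ (s-2)) * (p i * (x i - m) ^ 2) := fun i => by ring
      rw [Finset.sum_congr rfl fun i _ => e i, Finset.sum_sub_distrib, Finset.sum_add_distrib,
        ← Finset.mul_sum, ← Finset.mul_sum, hsum1, hsum2, hconst]
      ring
    rw [hL] at h
    linarith
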